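/- Consider the primal DNN min ⟨C,X⟩ subject to 𝒜X = b, X positive semidefinite, X ≥ 0 entrywise, with optimal solution X* of optimal value p*. Given y ∈ ℝ^m and a symmetric entrywise-nonnegative matrix S, define Z̃ = C − 𝒜ᵀy − S. If x̄ ≥ λ_max(X*) and z̲ ≤ λ_min(Z̃), then p* ≥ bᵀy + x̄ · (sum of negative eigenvalues of Z̃) ≥ bᵀy + n·x̄·min{0, z̲}. -/

import Mathlib

open Matrix

lemma psd_diag_nonneg {n : ℕ} {M : Matrix (Fin n) (Fin n) ℝ} (h : M.PosSemidef) (k : Fin n) :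
    0 ≤ M k k := by
  have := h.dotProduct_mulVec_nonneg (Pi.single k 1)
  simpa [dotProduct, mulVec, Pi.single_apply, Finset.sum_ite_eq] using this

lemma trace_diagonal_mul' {n : ℕ} (d : Fin n → ℝ) (M : Matrix (Fin n) (Fin n) ℝ) :
    (Matrix.diagonal d * M).trace = ∑ k, d k * M k k := by
  simp [Matrix.trace, Matrix.diag, Matrix.diagonal_mul]

lemma smul_one_sub_psd {n : ℕ} {X : Matrix (Fin n) (Fin n) ℝ} (hX : X.PosSemidef) (xbar : ℝ)
    (h : ∀ k, hX.1.eigenvalues k ≤ xbar) :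
    (xbar • (1 : Matrix (Fin n) (Fin n) ℝ) - X).PosSemidef := by
  set V := (hX.1.eigenvectorUnitary : Matrix (Fin n) (Fin n) ℝ) with hV
  have hVV : V * star V = 1 := (Matrix.mem_unitaryGroup_iff).mp (hX.1.eigenvectorUnitary).2
  have key : xbar • (1 : Matrix (Fin n) (Fin n) ℝ) - X
      = V * Matrix.diagonal (fun k => xbar - hX.1.eigenvalues k) * star V := by
    conv_lhs => rw [hX.1.spectral_theorem, Unitary.conjStarAlgAut_apply]
    have : (Matrix.diagonal (fun k => xbar - hX.1.eigenvalues k))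
        = xbar • 1 - Matrix.diagonal (RCLike.ofReal ∘ hX.1.eigenvalues) := by
      simp [Matrix.diagonal_sub, Matrix.smul_one_eq_diagonal]
    rw [this, Matrix.mul_sub, Matrix.sub_mul, Matrix.mul_smul, Matrix.mul_one, Matrix.smul_mul,
      hVV]
  rw [key]
  exact (Matrix.posSemidef_diagonal_iff.mpr (fun k => by simpa using h k)).mul_mul_conjTranspose_same V

/-- error bound of Jansson–Chaykin–Keil for DNNs. For a primal
optimal `Xstar` with value `pstar`, and any `y`, nonnegative symmetric `S`,
setting `Zt = C − 𝒜ᵀy − S`, if `xbar ≥ λ_max(Xstar)` and `zlow ≤ λ_min(Zt)` then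
`pstar ≥ bᵀy + xbar·(sum of negative eigenvalues of Zt) ≥ bᵀy + n·xbar·min{0,zlow}`. -/
theorem stmt_2 (n m : ℕ)
    (C : Matrix (Fin n) (Fin n) ℝ) (A : Fin m → Matrix (Fin n) (Fin n) ℝ)
    (b : Fin m → ℝ)
    (hC : C.IsSymm) (hA : ∀ i, (A i).IsSymm)
    (Xstar : Matrix (Fin n) (Fin n) ℝ) (pstar : ℝ)
    (hfeas : (∀ i, (A i * Xstar).trace = b i) ∧ Xstar.PosSemidef ∧ ∀ i j, 0 ≤ Xstar i j)
    (hopt : ∀ X : Matrix (Fin n) (Fin n) ℝ,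
      ((∀ i, (A i * X).trace = b i) ∧ X.PosSemidef ∧ ∀ i j, 0 ≤ X i j) →
      (C * Xstar).trace ≤ (C * X).trace)
    (hp : pstar = (C * Xstar).trace)
    (y : Fin m → ℝ) (S : Matrix (Fin n) (Fin n) ℝ)
    (hS : S.IsSymm) (hSnn : ∀ i j, 0 ≤ S i j)
    (Zt : Matrix (Fin n) (Fin n) ℝ)
    (hZtdef : Zt = C - (∑ i, y i • A i) - S)
    (hZtH : Zt.IsHermitian)
    (xbar zlow : ℝ)
    (hxbar : ∀ k, hfeas.2.1.1.eigenvalues k ≤ xbar)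
    (hzlow : ∀ k, zlow ≤ hZtH.eigenvalues k) :
    pstar ≥ (∑ i, b i * y i)
      + xbar * ∑ k ∈ Finset.univ.filter (fun k => hZtH.eigenvalues k < 0), hZtH.eigenvalues k
    ∧ (∑ i, b i * y i)
      + xbar * ∑ k ∈ Finset.univ.filter (fun k => hZtH.eigenvalues k < 0), hZtH.eigenvalues k
      ≥ (∑ i, b i * y i) + (n : ℝ) * xbar * min 0 zlow := by
  classical
  have hXpsd : Xstar.PosSemidef := hfeas.2.1
  set lam := hZtH.eigenvalues with hlam
  set F := Finset.univ.filter (fun k => lam k < 0) with hF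
  set U := (hZtH.eigenvectorUnitary : Matrix (Fin n) (Fin n) ℝ) with hU
  have hUU : star U * U = 1 := (Matrix.mem_unitaryGroup_iff').mp (hZtH.eigenvectorUnitary).2
  set M := star U * Xstar * U with hM
  have hMpsd : M.PosSemidef := by
    have := hXpsd.conjTranspose_mul_mul_same U
    rwa [← Matrix.star_eq_conjTranspose] at this
  have hMd : ∀ k, 0 ≤ M k k := psd_diag_nonneg hMpsd
  have hMub : ∀ k, M k k ≤ xbar := by
    intro k
    have h1 := smul_one_sub_psd hXpsd xbar hxbar
    have h2 := h1.conjTranspose_mul_mul_same U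
    rw [← Matrix.star_eq_conjTranspose] at h2
    have h3 : star U * (xbar • (1 : Matrix (Fin n) (Fin n) ℝ) - Xstar) * U
        = xbar • (1 : Matrix (Fin n) (Fin n) ℝ) - M := by
      rw [Matrix.mul_sub, Matrix.sub_mul, Matrix.mul_smul, Matrix.mul_one, Matrix.smul_mul, hUU,
        hM]
    rw [h3] at h2
    have := psd_diag_nonneg h2 k
    simp [Matrix.one_apply] at this
    linarith
  have htr : (Zt * Xstar).trace = ∑ k, lam k * M k k := by
    calc (Zt * Xstar).trace
        = ((U * (Matrix.diagonal (RCLike.ofReal ∘ lam) * (star U * Xstar)))).trace := by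
          conv_lhs => rw [hZtH.spectral_theorem, Unitary.conjStarAlgAut_apply]
          simp only [Matrix.mul_assoc]
          rfl
      _ = ((Matrix.diagonal (RCLike.ofReal ∘ lam) * (star U * Xstar)) * U).trace :=
          Matrix.trace_mul_comm _ _
      _ = (Matrix.diagonal (RCLike.ofReal ∘ lam) * M).trace := by
          rw [hM]; simp only [Matrix.mul_assoc]
      _ = ∑ k, lam k * M k k := by
          rw [trace_diagonal_mul']
          simp [RCLike.ofReal]
  have hsum : xbar * ∑ k ∈ F, lam k ≤ ∑ k, lam k * M k k := by
    rw [Finset.mul_sum]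
    calc ∑ k ∈ F, xbar * lam k ≤ ∑ k ∈ F, lam k * M k k := by
          refine Finset.sum_le_sum fun k hk => ?_
          have hk' : lam k < 0 := (Finset.mem_filter.mp hk).2
          have := mul_le_mul_of_nonpos_left (hMub k) hk'.le
          linarith
      _ ≤ ∑ k, lam k * M k k := by
          rw [← Finset.sum_filter_add_sum_filter_not Finset.univ (fun k => lam k < 0)
            (fun k => lam k * M k k)]
          have h0 : 0 ≤ ∑ k ∈ Finset.univ.filter (fun k => ¬ lam k < 0), lam k * M k k :=
            Finset.sum_nonneg fun k hk =>
              mul_nonneg (not_lt.mp (Finset.mem_filter.mp hk).2) (hMd k)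
          rw [hF]
          linarith
  have htrS : 0 ≤ (S * Xstar).trace := by
    simp only [Matrix.trace, Matrix.diag, Matrix.mul_apply]
    exact Finset.sum_nonneg fun i _ => Finset.sum_nonneg fun j _ =>
      mul_nonneg (hSnn i j) (hfeas.2.2 j i)
  have hCd : C = Zt + (∑ i, y i • A i) + S := by rw [hZtdef]; abel
  have htrT : ((∑ i, y i • A i) * Xstar).trace = ∑ i, b i * y i := by
    rw [Finset.sum_mul]
    simp only [Matrix.smul_mul, Matrix.trace_sum, Matrix.trace_smul]
    exact Finset.sum_congr rfl fun i _ => by rw [hfeas.1 i]; simp [mul_comm]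
  have htrC : (C * Xstar).trace
      = (Zt * Xstar).trace + (∑ i, b i * y i) + (S * Xstar).trace := by
    conv_lhs => rw [hCd]
    rw [Matrix.add_mul, Matrix.add_mul, Matrix.trace_add, Matrix.trace_add, htrT]
  constructor
  · rw [hp, htrC, htr]
    linarith
  · rcases Nat.eq_zero_or_pos n with hn | hn
    · subst hn
      simp [hF]
    · have hxnn : 0 ≤ xbar := le_trans (hXpsd.eigenvalues_nonneg ⟨0, hn⟩) (hxbar _)
      have hmin : min 0 zlow ≤ 0 := min_le_left _ _
      have h1 : (n : ℝ) * min 0 zlow ≤ ∑ k ∈ F, lam k := by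
        calc (n : ℝ) * min 0 zlow ≤ (F.card : ℝ) * min 0 zlow := by
              have hcard : (F.card : ℝ) ≤ n := by
                have := Finset.card_filter_le Finset.univ (fun k => lam k < 0)
                simp only [Finset.card_univ, Fintype.card_fin] at this
                exact_mod_cast this
              exact mul_le_mul_of_nonpos_right hcard hmin
          _ ≤ ∑ k ∈ F, lam k := by
              have : ∑ k ∈ F, min 0 zlow ≤ ∑ k ∈ F, lam k :=
                Finset.sum_le_sum fun k _ => le_trans (min_le_right _ _) (hzlow k)
              simpa using this
      have := mul_le_mul_of_nonneg_left h1 hxnn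
      have heq : (n : ℝ) * xbar * min 0 zlow = xbar * ((n : ℝ) * min 0 zlow) := by ring
      linarith
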